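/- arXiv:1910.05842 — 2 statements merged into one kernel-verified Lean document; each statement's English description precedes it below -/
import Mathlib

section
/- Let r be a positive integer and let F be a function from pairs (i,j) with 0 ≤ i ≤ j ≤ r to the nonnegative integers that is monotone with respect to interval containment (F(i,j) ≤ F(k,l) whenever (i,j) ⊆ (k,l)). Then there exists a unique multiset BC of intervals (a,b) with 0 ≤ a ≤ b ≤ r such that for every (i,j), F(i,j) equals the number of intervals in BC contained in (i,j), if and only if the Möbius inversion of F over the containment poset of intervals is everywhere nonnegative. -/
/-- Integer intervals (a, b) with 0 ≤ a ≤ b ≤ r. -/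
abbrev Itv (r : ℕ) := {p : Fin (r + 1) × Fin (r + 1) // p.1 ≤ p.2}

/-- Containment of intervals: (a,b) ⊆ (c,d) iff c ≤ a and b ≤ d. -/
def itvLE {r : ℕ} (I J : Itv r) : Prop := J.1.1 ≤ I.1.1 ∧ I.1.2 ≤ J.1.2

instance {r : ℕ} : DecidableRel (itvLE (r := r)) := fun _ _ => instDecidableAnd

lemma itv_measure_lt {r : ℕ} {I J : Itv r} (h : itvLE I J) (hne : I ≠ J) :
    (I.1.2 : ℕ) - I.1.1 < (J.1.2 : ℕ) - J.1.1 := by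
  obtain ⟨h1, h2⟩ := h
  have hI := I.2
  have hJ := J.2
  have : ¬ ((I.1.1 : ℕ) = J.1.1 ∧ (I.1.2 : ℕ) = J.1.2) := by
    rintro ⟨e1, e2⟩
    exact hne (Subtype.ext (Prod.ext (Fin.ext e1) (Fin.ext e2)))
  simp only [Fin.le_def] at h1 h2 hI hJ
  omega

lemma uniq_mobius {r : ℕ} (g1 g2 : Itv r → ℤ)
    (h : ∀ J : Itv r, ∑ I ∈ Finset.univ.filter (fun I => itvLE I J), g1 I
        = ∑ I ∈ Finset.univ.filter (fun I => itvLE I J), g2 I) :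
    ∀ J, g1 J = g2 J := by
  have key : ∀ n (J : Itv r), (J.1.2 : ℕ) - J.1.1 < n → g1 J = g2 J := by
    intro n
    induction n with
    | zero => intro J hJ; omega
    | succ n ih =>
      intro J hJ
      have hJmem : J ∈ Finset.univ.filter (fun I => itvLE I J) := by
        exact Finset.mem_filter.mpr ⟨Finset.mem_univ _, le_refl _, le_refl _⟩
      have e1 := Finset.add_sum_erase _ g1 hJmem
      have e2 := Finset.add_sum_erase _ g2 hJmem
      have hrest : ∑ I ∈ (Finset.univ.filter (fun I => itvLE I J)).erase J, g1 I
          = ∑ I ∈ (Finset.univ.filter (fun I => itvLE I J)).erase J, g2 I := by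
        apply Finset.sum_congr rfl
        intro I hI
        simp only [Finset.mem_erase, Finset.mem_filter] at hI
        exact ih I (by have := itv_measure_lt hI.2.2 hI.1; omega)
      have := h J
      omega
  intro J; exact key ((J.1.2 : ℕ) - J.1.1 + 1) J (by omega)

lemma card_filter_count {r : ℕ} (BC : Multiset (Itv r)) (p : Itv r → Prop) [DecidablePred p] :
    (BC.filter p).card = ∑ I ∈ Finset.univ.filter p, BC.count I := by
  induction BC using Multiset.induction_on with
  | empty => simp
  | cons a s ih =>
    by_cases hpa : p a
    · rw [Multiset.filter_cons_of_pos _ hpa]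
      simp only [Multiset.card_cons, ih, Multiset.count_cons]
      rw [Finset.sum_add_distrib]
      have : ∑ I ∈ Finset.univ.filter p, (if I = a then 1 else 0) = 1 := by
        rw [Finset.sum_ite_eq' _ a (fun _ => 1)]
        simp [hpa]
      omega
    · rw [Multiset.filter_cons_of_neg _ hpa]
      rw [ih]
      apply Finset.sum_congr rfl
      intro I hI
      simp only [Finset.mem_filter] at hI
      rw [Multiset.count_cons_of_ne]
      rintro rfl; exact hpa hI.2

/-- Let F be a function on intervals (i,j), 0 ≤ i ≤ j ≤ r, monotone with respect to
containment, and let Gm be its Möbius inversion over the containment poset, i.e.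
F(J) = Σ_{I ⊆ J} Gm(I).  Then there is a unique multiset BC of intervals with
F(i,j) = #{I ∈ BC : I ⊆ (i,j)} for all (i,j) if and only if Gm is everywhere
nonnegative. -/
theorem statement3 (r : ℕ) (F : Itv r → ℕ)
    (hmono : ∀ I J : Itv r, itvLE I J → F I ≤ F J)
    (Gm : Itv r → ℤ)
    (hG : ∀ J : Itv r, (F J : ℤ) = ∑ I ∈ Finset.univ.filter (fun I => itvLE I J), Gm I) :
    (∃! BC : Multiset (Itv r),
        ∀ J : Itv r, F J = (BC.filter (fun I => itvLE I J)).card)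
      ↔ ∀ I : Itv r, 0 ≤ Gm I := by
  constructor
  · rintro ⟨BC, hBC, -⟩ I
    have hsum : ∀ J : Itv r,
        ∑ K ∈ Finset.univ.filter (fun K => itvLE K J), ((BC.count K : ℤ))
        = ∑ K ∈ Finset.univ.filter (fun K => itvLE K J), Gm K := by
      intro J
      rw [← hG J, hBC J, card_filter_count]
      push_cast
      ring
    have := uniq_mobius (fun K => (BC.count K : ℤ)) Gm hsum I
    rw [← this]
    positivity
  · intro hGm
    refine ⟨∑ I ∈ Finset.univ, (Gm I).toNat • {I}, ?_, ?_⟩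
    · intro J
      have hcount : ∀ K : Itv r,
          (∑ I ∈ Finset.univ, (Gm I).toNat • ({I} : Multiset (Itv r))).count K = (Gm K).toNat := by
        intro K
        rw [Multiset.count_sum']
        simp only [Multiset.count_nsmul, Multiset.count_singleton]
        rw [Finset.sum_eq_single K]
        · simp
        · intro b _ hb
          simp [Ne.symm hb]
        · simp
      rw [card_filter_count]
      have : (F J : ℤ) = ((∑ K ∈ Finset.univ.filter (fun K => itvLE K J),
          (∑ I ∈ Finset.univ, (Gm I).toNat • ({I} : Multiset (Itv r))).count K : ℕ) : ℤ) := by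
        rw [hG J]
        push_cast
        apply Finset.sum_congr rfl
        intro K _
        rw [hcount K]
        exact (Int.toNat_of_nonneg (hGm K)).symm
      exact_mod_cast this
    · intro BC' hBC'
      have hcount : ∀ K : Itv r,
          (∑ I ∈ Finset.univ, (Gm I).toNat • ({I} : Multiset (Itv r))).count K = (Gm K).toNat := by
        intro K
        rw [Multiset.count_sum']
        simp only [Multiset.count_nsmul, Multiset.count_singleton]
        rw [Finset.sum_eq_single K]
        · simp
        · intro b _ hb
          simp [Ne.symm hb]
        · simp
      have hsum : ∀ J : Itv r,
          ∑ K ∈ Finset.univ.filter (fun K => itvLE K J), ((BC'.count K : ℤ))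
          = ∑ K ∈ Finset.univ.filter (fun K => itvLE K J),
              (((∑ I ∈ Finset.univ, (Gm I).toNat • ({I} : Multiset (Itv r))).count K : ℤ)) := by
        intro J
        have h1 : (F J : ℤ) = ∑ K ∈ Finset.univ.filter (fun K => itvLE K J), ((BC'.count K : ℤ)) := by
          rw [hBC' J, card_filter_count]; push_cast; ring
        rw [← h1, hG J]
        apply Finset.sum_congr rfl
        intro K _
        rw [hcount K, Int.toNat_of_nonneg (hGm K)]
      have := uniq_mobius _ _ hsum
      ext K
      have hK := this K
      exact_mod_cast hK
end

section
/- Let G be a finite connected rooted graph of radius r that is 'perfectly coordinated': it is bipartite with every edge joining consecutive distance shells, every vertex at even distance from the root not in the outermost shell has degree d₀, and every vertex at odd distance not in the outermost shell has degree d₁. Then the shell counts (#atoms(k) for 0 ≤ k ≤ r) determine, and are determined by, the sequence F(0, r₀) for 0 ≤ r₀ ≤ r, where F(0, r₀) is the cycle rank of the subgraph induced on vertices within distance r₀ of the root. -/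
/-- The cycle rank of a finite graph: #components − #vertices + #edges. -/
noncomputable def cycleRank {V : Type*} [Fintype V] (G : SimpleGraph V) : ℤ :=
  (Nat.card G.ConnectedComponent : ℤ) - (Fintype.card V : ℤ) + (Nat.card G.edgeSet : ℤ)

/-- The ball of radius r₀: the subgraph induced on vertices within distance r₀ of the root. -/
def ballSubgraph {V : Type*} (G : SimpleGraph V) (v : V) (r₀ : ℕ) : SimpleGraph V where
  Adj a b := G.Adj a b ∧ G.dist v a ≤ r₀ ∧ G.dist v b ≤ r₀
  symm := ⟨fun _ _ ⟨h, h1, h2⟩ => ⟨h.symm, h2, h1⟩⟩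
  loopless := ⟨fun a h => G.loopless.irrefl a h.1⟩

/-- #atoms(k): the number of vertices at distance exactly k from the root. -/
noncomputable def shellCount {V : Type*} [Fintype V] (G : SimpleGraph V) (v : V) (k : ℕ) : ℕ :=
  Nat.card {u : V | G.dist v u = k}



open SimpleGraph
set_option linter.unusedSectionVars false

section aux
variable {V : Type} [Fintype V] (G : SimpleGraph V) (v : V)

lemma exists_pred (hconn : G.Connected) {a : V} {n : ℕ} (h : G.dist v a = n + 1) :
    ∃ b : V, G.Adj b a ∧ G.dist v b = n := by
  obtain ⟨p, hp⟩ := hconn.exists_walk_length_eq_dist v a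
  cases hq : p.reverse with
  | nil =>
      exfalso
      have := congrArg SimpleGraph.Walk.length hq
      rw [SimpleGraph.Walk.length_reverse, hp, h] at this
      simp at this
  | cons hadj q =>
      rename_i b
      refine ⟨b, hadj.symm, ?_⟩
      have hlen : q.length = n := by
        have := congrArg SimpleGraph.Walk.length hq
        rw [SimpleGraph.Walk.length_reverse, hp, h] at this
        simpa using this.symm
      have h1 : G.dist v b ≤ n := by
        simpa [hlen] using SimpleGraph.dist_le q.reverse
      have h2 : n ≤ G.dist v b := by
        obtain ⟨w, hw⟩ := hconn.exists_walk_length_eq_dist v b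
        have := SimpleGraph.dist_le (w.concat hadj.symm)
        rw [SimpleGraph.Walk.length_concat, hw, h] at this
        omega
      omega

lemma ball_reach (hconn : G.Connected) (r₀ : ℕ) :
    ∀ n : ℕ, ∀ a : V, G.dist v a = n → n ≤ r₀ → (ballSubgraph G v r₀).Reachable v a := by
  intro n
  induction n with
  | zero =>
      intro a ha _
      rw [hconn.dist_eq_zero_iff] at ha
      exact ha ▸ Reachable.refl v
  | succ k ih =>
      intro a ha hle
      obtain ⟨b, hadj, hb⟩ := exists_pred G v hconn ha
      have hr : (ballSubgraph G v r₀).Reachable v b := ih b hb (by omega)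
      refine hr.trans (SimpleGraph.Adj.reachable ?_)
      exact ⟨hadj, by omega, by omega⟩

lemma comp_count (hconn : G.Connected) (r₀ : ℕ) :
    Nat.card (ballSubgraph G v r₀).ConnectedComponent
      = Nat.card {u : V | r₀ < G.dist v u} + 1 := by
  classical
  set B := ballSubgraph G v r₀ with hB
  set g : V → Option {u : V | r₀ < G.dist v u} :=
    fun u => if h : r₀ < G.dist v u then some ⟨u, h⟩ else none with hg
  have hgadj : ∀ a b : V, B.Adj a b → g a = g b := by
    intro a b ⟨_, h1, h2⟩
    simp [hg, dif_neg (by omega : ¬ r₀ < G.dist v a), dif_neg (by omega : ¬ r₀ < G.dist v b)]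
  have hgw : ∀ (a b : V) (p : B.Walk a b), g a = g b := by
    intro a b p
    induction p with
    | nil => rfl
    | cons h p ih => rw [hgadj _ _ h]; exact ih
  set f : B.ConnectedComponent → Option {u : V | r₀ < G.dist v u} :=
    ConnectedComponent.lift g (fun a b p _ => hgw a b p) with hf
  have hbij : Function.Bijective f := by
    constructor
    · intro c d
      refine ConnectedComponent.ind₂ (fun a b h => ?_) c d
      simp only [hf, ConnectedComponent.lift_mk] at h
      by_cases ha : r₀ < G.dist v a <;> by_cases hb : r₀ < G.dist v b
      · simp only [hg, dif_pos ha, dif_pos hb, Option.some.injEq, Subtype.mk.injEq] at h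
        exact congrArg _ h
      · simp [hg, dif_pos ha, dif_neg hb] at h
      · simp [hg, dif_pos hb, dif_neg ha] at h
      · have h1 := ball_reach G v hconn r₀ (G.dist v a) a rfl (by omega)
        have h2 := ball_reach G v hconn r₀ (G.dist v b) b rfl (by omega)
        exact ConnectedComponent.sound (h1.symm.trans h2)
    · intro o
      match o with
      | none =>
          refine ⟨B.connectedComponentMk v, ?_⟩
          simp [hf, hg, SimpleGraph.dist_self]
      | some ⟨u, hu⟩ =>
          refine ⟨B.connectedComponentMk u, ?_⟩
          simp only [hf, hg, ConnectedComponent.lift_mk]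
          exact dif_pos hu
  rw [Nat.card_congr (Equiv.ofBijective f hbij), Nat.card_eq_fintype_card,
    Nat.card_eq_fintype_card, Fintype.card_option]

def Pset (k : ℕ) : Set (V × V) :=
  {p | G.Adj p.1 p.2 ∧ G.dist v p.1 = k ∧ G.dist v p.2 = k + 1}

def Qset (k : ℕ) : Set (V × V) := {p | G.Adj p.1 p.2 ∧ G.dist v p.1 = k}

lemma shell_zero (hconn : G.Connected) : shellCount G v 0 = 1 := by
  have : {u : V | G.dist v u = 0} = {v} := by
    ext u
    simp [hconn.dist_eq_zero_iff, eq_comm]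
  rw [shellCount, this, Nat.card_coe_set_eq, Set.ncard_singleton]

lemma ball_card (r₀ : ℕ) :
    Nat.card {u : V | G.dist v u ≤ r₀} = ∑ k ∈ Finset.range (r₀+1), shellCount G v k := by
  induction r₀ with
  | zero =>
      have h0 : {u : V | G.dist v u ≤ 0} = {u : V | G.dist v u = 0} := by
        ext u; simp [Nat.le_zero]
      rw [Finset.range_one, Finset.sum_singleton, shellCount, h0]
  | succ k ih =>
      have hset : {u : V | G.dist v u ≤ k + 1}
          = {u : V | G.dist v u ≤ k} ∪ {u : V | G.dist v u = k + 1} := by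
        ext u; simp; omega
      have hdisj : Disjoint {u : V | G.dist v u ≤ k} {u : V | G.dist v u = k + 1} := by
        rw [Set.disjoint_left]
        intro u h1 h2
        simp only [Set.mem_setOf_eq] at h1 h2
        omega
      rw [Nat.card_coe_set_eq, hset, Set.ncard_union_eq hdisj,
        Finset.sum_range_succ, ← ih, shellCount, Nat.card_coe_set_eq,
        Nat.card_coe_set_eq]

lemma vertex_split (r₀ : ℕ) :
    Fintype.card V
      = Nat.card {u : V | G.dist v u ≤ r₀} + Nat.card {u : V | r₀ < G.dist v u} := by
  have hc : {u : V | r₀ < G.dist v u} = {u : V | G.dist v u ≤ r₀}ᶜ := by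
    ext u; simp
  rw [hc, Nat.card_coe_set_eq, Nat.card_coe_set_eq,
    Set.ncard_add_ncard_compl, Nat.card_eq_fintype_card]

lemma ball_adj {a b : V} {r₀ : ℕ} :
    (ballSubgraph G v r₀).Adj a b ↔ G.Adj a b ∧ G.dist v a ≤ r₀ ∧ G.dist v b ≤ r₀ :=
  Iff.rfl

lemma edge_zero (hconn : G.Connected) : Nat.card (ballSubgraph G v 0).edgeSet = 0 := by
  have h : (ballSubgraph G v 0).edgeSet = ∅ := by
    ext e
    refine e.ind (fun a b => ?_)
    simp only [SimpleGraph.mem_edgeSet, Set.mem_empty_iff_false, iff_false]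
    rintro ⟨hadj, h1, h2⟩
    have ha : a = v := hconn.dist_eq_zero_iff.mp (by omega) |>.symm
    have hb : b = v := hconn.dist_eq_zero_iff.mp (by omega) |>.symm
    rw [ha, hb] at hadj
    exact G.loopless.irrefl v hadj
  rw [h]
  simp

lemma edge_step
    (hbip : ∀ a b : V, G.Adj a b →
      G.dist v a + 1 = G.dist v b ∨ G.dist v b + 1 = G.dist v a) (k : ℕ) :
    Nat.card (ballSubgraph G v (k+1)).edgeSet
      = Nat.card (ballSubgraph G v k).edgeSet + Nat.card (Pset G v k) := by
  have hset : (ballSubgraph G v (k+1)).edgeSet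
      = (ballSubgraph G v k).edgeSet ∪ (Sym2.mk.uncurry '' (Pset G v k)) := by
    ext e
    refine e.ind (fun a b => ?_)
    simp only [Set.mem_union, SimpleGraph.mem_edgeSet, Set.mem_image, ball_adj,
      Pset, Set.mem_setOf_eq, Prod.exists]
    constructor
    · rintro ⟨hadj, h1, h2⟩
      rcases hbip a b hadj with hc | hc
      · by_cases hbk : G.dist v b ≤ k
        · exact Or.inl ⟨hadj, by omega, hbk⟩
        · exact Or.inr ⟨a, b, ⟨hadj, by omega, by omega⟩, rfl⟩
      · by_cases hak : G.dist v a ≤ k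
        · exact Or.inl ⟨hadj, hak, by omega⟩
        · exact Or.inr ⟨b, a, ⟨hadj.symm, by omega, by omega⟩, Sym2.eq_swap⟩
    · rintro (⟨hadj, h1, h2⟩ | ⟨x, y, ⟨hadj, hx, hy⟩, he⟩)
      · exact ⟨hadj, by omega, by omega⟩
      · rcases Sym2.eq_iff.mp (show s(x, y) = s(a, b) from he) with ⟨hax, hby⟩ | ⟨hay, hbx⟩
        · subst hax; subst hby
          exact ⟨hadj, by omega, by omega⟩
        · subst hay; subst hbx
          exact ⟨hadj.symm, by omega, by omega⟩
  have hdisj : Disjoint (ballSubgraph G v k).edgeSet (Sym2.mk.uncurry '' (Pset G v k)) := by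
    rw [Set.disjoint_left]
    rintro e he ⟨⟨x, y⟩, ⟨hadj, hx, hy⟩, rfl⟩
    change s(x, y) ∈ _ at he
    rw [SimpleGraph.mem_edgeSet, ball_adj] at he
    obtain ⟨-, -, h2⟩ := he
    simp only at hx hy h2
    omega
  have hinj : Set.InjOn Sym2.mk.uncurry (Pset G v k) := by
    rintro ⟨x, y⟩ hxy ⟨z, w⟩ hzw he
    obtain ⟨-, hx, hy⟩ := hxy
    obtain ⟨-, hz, hw⟩ := hzw
    simp only at hx hy hz hw
    rcases Sym2.eq_iff.mp (show s(x, y) = s(z, w) from he) with ⟨h1, h2⟩ | ⟨h1, h2⟩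
    · rw [Prod.ext_iff]; exact ⟨h1, h2⟩
    · exfalso; subst h1; subst h2; omega
  rw [hset, Nat.card_coe_set_eq, Set.ncard_union_eq hdisj,
    Set.ncard_image_of_injOn hinj, Nat.card_coe_set_eq, Nat.card_coe_set_eq]

def shd (d₀ d₁ k : ℕ) : ℕ := if Even k then d₀ else d₁

lemma q_card {r d₀ d₁ : ℕ}
    (hdeg : ∀ u : V, G.dist v u < r →
      Nat.card (G.neighborSet u) = if Even (G.dist v u) then d₀ else d₁)
    (k : ℕ) (hk : k < r) :
    Nat.card (Qset G v k) = shellCount G v k * shd d₀ d₁ k := by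
  classical
  let e : Qset G v k ≃ Σ u : {u : V // G.dist v u = k}, (G.neighborSet u.1) :=
    { toFun := fun p => ⟨⟨p.1.1, p.2.2⟩, ⟨p.1.2, p.2.1⟩⟩
      invFun := fun s => ⟨(s.1.1, s.2.1), s.2.2, s.1.2⟩
      left_inv := fun p => rfl
      right_inv := fun s => rfl }
  rw [Nat.card_congr e, Nat.card_eq_fintype_card, Fintype.card_sigma]
  have hterm : ∀ u : {u : V // G.dist v u = k},
      Fintype.card (G.neighborSet u.1) = shd d₀ d₁ k := by
    intro u
    rw [← Nat.card_eq_fintype_card, hdeg u.1 (by rw [u.2]; exact hk), u.2, shd]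
  rw [Finset.sum_congr rfl (fun u _ => hterm u), Finset.sum_const, Finset.card_univ,
    smul_eq_mul]
  congr 1
  rw [shellCount, Nat.card_eq_fintype_card]
  exact Fintype.card_congr (Equiv.refl _)

lemma q_zero
    (hbip : ∀ a b : V, G.Adj a b →
      G.dist v a + 1 = G.dist v b ∨ G.dist v b + 1 = G.dist v a) :
    Qset G v 0 = Pset G v 0 := by
  ext ⟨a, b⟩
  simp only [Qset, Pset, Set.mem_setOf_eq]
  constructor
  · rintro ⟨hadj, ha⟩
    refine ⟨hadj, ha, ?_⟩
    rcases hbip a b hadj with hc | hc <;> omega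
  · rintro ⟨hadj, ha, -⟩
    exact ⟨hadj, ha⟩

lemma q_split
    (hbip : ∀ a b : V, G.Adj a b →
      G.dist v a + 1 = G.dist v b ∨ G.dist v b + 1 = G.dist v a) (k : ℕ) :
    Nat.card (Qset G v (k+1)) = Nat.card (Pset G v (k+1)) + Nat.card (Pset G v k) := by
  have hset : Qset G v (k+1) = Pset G v (k+1) ∪ (Prod.swap '' (Pset G v k)) := by
    ext ⟨a, b⟩
    simp only [Qset, Pset, Set.mem_setOf_eq, Set.mem_union, Set.mem_image, Prod.exists,
      Prod.swap_prod_mk, Prod.mk.injEq]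
    constructor
    · rintro ⟨hadj, ha⟩
      rcases hbip a b hadj with hc | hc
      · exact Or.inl ⟨hadj, by omega, by omega⟩
      · exact Or.inr ⟨b, a, ⟨hadj.symm, by omega, by omega⟩, rfl, rfl⟩
    · rintro (⟨hadj, ha, -⟩ | ⟨x, y, ⟨hadj, hx, hy⟩, h1, h2⟩)
      · exact ⟨hadj, ha⟩
      · subst h1; subst h2
        exact ⟨hadj.symm, by omega⟩
  have hdisj : Disjoint (Pset G v (k+1)) (Prod.swap '' (Pset G v k)) := by
    rw [Set.disjoint_left]
    rintro ⟨a, b⟩ ⟨-, -, hb⟩ ⟨⟨x, y⟩, ⟨-, hx, hy⟩, hs⟩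
    simp only [Prod.swap_prod_mk, Prod.mk.injEq] at hs
    obtain ⟨h1, h2⟩ := hs
    subst h1; subst h2
    dsimp only at hb hx hy
    omega
  rw [hset, Nat.card_coe_set_eq, Set.ncard_union_eq hdisj,
    Set.ncard_image_of_injective _ Prod.swap_injective,
    Nat.card_coe_set_eq, Nat.card_coe_set_eq]

end aux

def DD (d₀ d₁ : ℕ) (a : ℕ → ℕ) : ℕ → ℤ
  | 0 => 0
  | k+1 => (a k : ℤ) * (shd d₀ d₁ k : ℤ) - DD d₀ d₁ a k

def ee (d₀ d₁ : ℕ) (a : ℕ → ℕ) : ℕ → ℤ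
  | 0 => 0
  | k+1 => ee d₀ d₁ a k + DD d₀ d₁ a (k+1)

def psiRec (d₀ d₁ : ℕ) (F : ℕ → ℤ) : ℕ → ℕ × ℤ
  | 0 => (1, 0)
  | k+1 =>
      let p := psiRec d₀ d₁ F k
      let D1 : ℤ := (p.1 : ℤ) * (shd d₀ d₁ k : ℤ) - p.2
      ((D1 - (F (k+1) - F k)).toNat, D1)

section main
variable {V : Type} [Fintype V] (G : SimpleGraph V) (v : V) {r d₀ d₁ : ℕ}

variable
  (hconn : G.Connected)
  (hbip : ∀ a b : V, G.Adj a b →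
      G.dist v a + 1 = G.dist v b ∨ G.dist v b + 1 = G.dist v a)
  (hdeg : ∀ u : V, G.dist v u < r →
      Nat.card (G.neighborSet u) = if Even (G.dist v u) then d₀ else d₁)

include hconn hbip hdeg

lemma p_card : ∀ k : ℕ, k < r →
    (Nat.card (Pset G v k) : ℤ) = DD d₀ d₁ (shellCount G v) (k+1) := by
  intro k
  induction k with
  | zero =>
      intro hk
      rw [← q_zero G v hbip, q_card G v hdeg 0 hk]
      simp [DD]
  | succ k ih =>
      intro hk
      have hq := q_split G v hbip k
      rw [q_card G v hdeg (k+1) hk] at hq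
      have hih := ih (by omega)
      have : (Nat.card (Pset G v (k+1)) : ℤ)
          = (shellCount G v (k+1) : ℤ) * (shd d₀ d₁ (k+1) : ℤ)
            - (Nat.card (Pset G v k) : ℤ) := by
        have := congrArg (fun n : ℕ => (n : ℤ)) hq
        push_cast at this ⊢
        omega
      rw [this, hih]
      rfl

lemma e_card : ∀ r₀ : ℕ, r₀ ≤ r →
    (Nat.card (ballSubgraph G v r₀).edgeSet : ℤ) = ee d₀ d₁ (shellCount G v) r₀ := by
  intro r₀
  induction r₀ with
  | zero =>
      intro _
      rw [edge_zero G v hconn]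
      rfl
  | succ k ih =>
      intro hk
      rw [edge_step G v hbip k]
      push_cast
      rw [ih (by omega), p_card G v hconn hbip hdeg k (by omega)]
      rfl

lemma F_formula : ∀ r₀ : ℕ, r₀ ≤ r →
    cycleRank (ballSubgraph G v r₀)
      = 1 - (∑ k ∈ Finset.range (r₀+1), (shellCount G v k : ℤ))
        + ee d₀ d₁ (shellCount G v) r₀ := by
  intro r₀ hr₀
  rw [cycleRank, comp_count G v hconn r₀, ← e_card G v hconn hbip hdeg r₀ hr₀]
  have hv := vertex_split G v r₀
  have hb := ball_card G v r₀
  have : (Fintype.card V : ℤ)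
      = (∑ k ∈ Finset.range (r₀+1), (shellCount G v k : ℤ))
        + (Nat.card {u : V | r₀ < G.dist v u} : ℤ) := by
    rw [hv, hb]
    push_cast
    ring
  rw [this]
  push_cast
  ring

end main


/-- For perfectly coordinated rooted graphs (connected, bipartite with edges joining
consecutive shells, interior vertices at even distance of degree d₀ and at odd distance of
degree d₁), the shell counts #atoms(k), 0 ≤ k ≤ r, determine and are determined by the
sequence F(0,r₀) of cycle ranks of the balls of radius r₀ ≤ r:  there are functions Φ, Ψ
(depending only on r, d₀, d₁) computing each sequence from the other. -/
theorem statement6 (r d₀ d₁ : ℕ) :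
    ∃ (Φ : (ℕ → ℕ) → (ℕ → ℤ)) (Ψ : (ℕ → ℤ) → (ℕ → ℕ)),
      ∀ (V : Type) [Fintype V] (G : SimpleGraph V) (v : V),
        G.Connected →
        (∀ u : V, G.dist v u ≤ r) →
        (∀ a b : V, G.Adj a b →
          G.dist v a + 1 = G.dist v b ∨ G.dist v b + 1 = G.dist v a) →
        (∀ u : V, G.dist v u < r →
          Nat.card (G.neighborSet u) = if Even (G.dist v u) then d₀ else d₁) →
        (∀ r₀ : ℕ, r₀ ≤ r →
            Φ (fun k => shellCount G v k) r₀ = cycleRank (ballSubgraph G v r₀)) ∧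
        (∀ k : ℕ, k ≤ r →
            Ψ (fun r₀ => cycleRank (ballSubgraph G v r₀)) k = shellCount G v k) := by
  refine ⟨fun a r₀ => 1 - (∑ k ∈ Finset.range (r₀+1), (a k : ℤ)) + ee d₀ d₁ a r₀,
    fun F k => (psiRec d₀ d₁ F k).1, ?_⟩
  intro V _ G v hconn _hrad hbip hdeg
  constructor
  · intro r₀ hr₀
    exact (F_formula G v hconn hbip hdeg r₀ hr₀).symm
  · intro k hk
    have key : ∀ k : ℕ, k ≤ r →
        psiRec d₀ d₁ (fun r₀ => cycleRank (ballSubgraph G v r₀)) k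
          = (shellCount G v k, DD d₀ d₁ (shellCount G v) k) := by
      intro k
      induction k with
      | zero =>
          intro _
          rw [psiRec, shell_zero G v hconn]
          rfl
      | succ k ih =>
          intro hk1
          rw [psiRec, ih (by omega)]
          have h1 := F_formula G v hconn hbip hdeg (k+1) hk1
          have h2 := F_formula G v hconn hbip hdeg k (by omega)
          have hdiff : cycleRank (ballSubgraph G v (k+1)) - cycleRank (ballSubgraph G v k)
              = -(shellCount G v (k+1) : ℤ) + DD d₀ d₁ (shellCount G v) (k+1) := by
            rw [h1, h2, Finset.sum_range_succ]
            show _ = _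
            rw [ee]
            ring
          have hD1 : ((shellCount G v k : ℤ) * (shd d₀ d₁ k : ℤ)
              - DD d₀ d₁ (shellCount G v) k) = DD d₀ d₁ (shellCount G v) (k+1) := rfl
          simp only [hD1]
          have : (DD d₀ d₁ (shellCount G v) (k+1)
              - (cycleRank (ballSubgraph G v (k+1)) - cycleRank (ballSubgraph G v k)))
              = (shellCount G v (k+1) : ℤ) := by
            rw [hdiff]; ring
          rw [Prod.ext_iff]
          constructor
          · show (DD d₀ d₁ (shellCount G v) (k+1)
              - (cycleRank (ballSubgraph G v (k+1)) - cycleRank (ballSubgraph G v k))).toNat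
              = shellCount G v (k+1)
            rw [this, Int.toNat_natCast]
          · rfl
    show (psiRec d₀ d₁ (fun r₀ => cycleRank (ballSubgraph G v r₀)) k).1 = shellCount G v k
    rw [key k hk]
end
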